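/- A set X ⊆ [ω]^ω is κ-unbounded (i.e., |X| ≥ κ and for each b ∈ ω^ω there is A ⊆ X with |A| < κ such that b(n) < x(n) for infinitely many n, for all x ∈ X∖A) if and only if the set X ∪ Fin is κ-concentrated on Fin, i.e., for every open set U ⊆ P(ω) containing Fin, |X ∖ U| < κ. -/

import Mathlib

open Cardinal Set

/-- The finite subsets of ω, as a subset of Cantor space `ℕ → Bool`. -/
def FinS : Set (ℕ → Bool) := {x | {n | x n = true}.Finite}

lemma finS_countable : FinS.Countable := by
  have h : FinS ⊆ Set.range (fun s : Finset ℕ => fun n => decide (n ∈ s)) := by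
    intro x hx
    refine ⟨hx.toFinset, funext fun n => ?_⟩
    by_cases hn : x n = true
    · simp [Set.Finite.mem_toFinset, hn]
      exact hx.mem_toFinset.2 hn
    · simp only [Bool.not_eq_true] at hn
      simp [Set.Finite.mem_toFinset, hn]
      exact fun h => absurd (hx.mem_toFinset.1 h : x n = true) (by simp [hn])
  exact (Set.countable_range _).mono h

lemma exists_b_of_open {U : Set (ℕ → Bool)} (hU : IsOpen U) (hFU : FinS ⊆ U) :
    ∃ c : ℕ → ℕ, ∀ x : ℕ → Bool, {n | x n = true}.Infinite → x ∉ U →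
      ∀ k, Nat.nth (fun k => x k = true) k < c k := by
  have key : ∀ s : Finset ℕ, ∃ m : ℕ, ∀ y : ℕ → Bool,
      (∀ i < m, y i = decide (i ∈ s)) → y ∈ U := by
    intro s
    have hs : (fun n => decide (n ∈ s)) ∈ U := by
      apply hFU
      have : {n | decide (n ∈ s) = true} ⊆ (s : Set ℕ) := by
        intro n hn; simpa using hn
      exact s.finite_toSet.subset this
    obtain ⟨I, u, hIu, hpi⟩ := isOpen_pi_iff.1 hU _ hs
    refine ⟨(I.sup id) + 1, fun y hy => hpi ?_⟩
    intro a ha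
    have : y a = decide (a ∈ s) := hy a (Nat.lt_succ_of_le (Finset.le_sup (f := id) ha))
    rw [this]; exact (hIu a ha).2
  choose M hM using key
  set D : ℕ → ℕ := fun n => (Finset.range n).powerset.sup M with hD
  have hDmono : Monotone D := fun a b hab =>
    Finset.sup_mono (Finset.powerset_mono.2 (Finset.range_subset_range.2 hab))
  have hMD : ∀ (s : Finset ℕ) (n : ℕ), s ⊆ Finset.range n → M s ≤ D n := by
    intro s n hs
    exact Finset.le_sup (Finset.mem_powerset.2 hs)
  refine ⟨fun k => Nat.rec (D 0) (fun _ ck => D (ck + 1)) k, fun x hx hxU k => ?_⟩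
  set p : ℕ → Prop := fun k => x k = true with hp
  have hinf : (setOf p).Infinite := hx
  have core : ∀ k, Nat.nth p k < M ((Finset.range k).image (Nat.nth p)) := by
    intro k
    by_contra hle
    push_neg at hle
    apply hxU
    apply hM
    intro i hi
    have hik : i < Nat.nth p k := lt_of_lt_of_le hi hle
    by_cases hxi : x i = true
    · have hpi : p i := hxi
      have hcount : Nat.count p (i + 1) ≤ k := by
        rw [Nat.count_le_iff_le_nth hinf]
        exact hik
      have hlt : Nat.count p i < k := by
        have := Nat.count_succ (p := p) i
        rw [this, if_pos hpi] at hcount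
        omega
      have hmem : i ∈ (Finset.range k).image (Nat.nth p) := by
        exact Finset.mem_image.2 ⟨Nat.count p i, Finset.mem_range.2 hlt, Nat.nth_count hpi⟩
      simp [hxi, hmem]
    · have hnm : i ∉ (Finset.range k).image (Nat.nth p) := by
        intro hmem
        obtain ⟨j, _, hj⟩ := Finset.mem_image.1 hmem
        exact hxi (hj ▸ Nat.nth_mem_of_infinite hinf j)
      simp only [Bool.not_eq_true] at hxi
      simp [hxi, hnm]
  induction k with
  | zero =>
    have h0 : ((Finset.range 0).image (Nat.nth p)) ⊆ Finset.range 0 := by simp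
    exact lt_of_lt_of_le (core 0) (hMD _ 0 h0)
  | succ k ih =>
    have hsub : ((Finset.range (k + 1)).image (Nat.nth p)) ⊆ Finset.range (Nat.nth p k + 1) := by
      intro i hi
      obtain ⟨j, hj, rfl⟩ := Finset.mem_image.1 hi
      have : j ≤ k := Nat.lt_succ_iff.1 (Finset.mem_range.1 hj)
      have := (Nat.nth_le_nth hinf).2 this
      exact Finset.mem_range.2 (by omega)
    have ih' : Nat.nth p k < (Nat.rec (D 0) (fun _ ck => D (ck + 1)) k : ℕ) := ih
    calc Nat.nth p (k + 1) < M ((Finset.range (k + 1)).image (Nat.nth p)) := core (k + 1)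
      _ ≤ D (Nat.nth p k + 1) := hMD _ _ hsub
      _ ≤ D ((Nat.rec (D 0) (fun _ ck => D (ck + 1)) k : ℕ) + 1) := hDmono (by omega)

/-- A set `X ⊆ [ω]^ω` is κ-unbounded iff `X ∪ Fin` is κ-concentrated
on `Fin`, for κ of uncountable cofinality. -/
theorem stmt0 (κ : Cardinal) (hκ : Cardinal.aleph0 < κ.ord.cof)
    (X : Set (ℕ → Bool)) (hX : ∀ x ∈ X, {n | x n = true}.Infinite) :
    (κ ≤ Cardinal.mk X ∧
      ∀ b : ℕ → ℕ, ∃ A ⊆ X, Cardinal.mk A < κ ∧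
        ∀ x ∈ X \ A, {n | b n < Nat.nth (fun k => x k = true) n}.Infinite)
    ↔
    (κ ≤ Cardinal.mk ↥(X ∪ FinS) ∧
      ∀ U : Set (ℕ → Bool), IsOpen U → FinS ⊆ U →
        Cardinal.mk ↥((X ∪ FinS) \ U) < κ) := by
  have haleph0_lt : Cardinal.aleph0 < κ := lt_of_lt_of_le hκ (Ordinal.cof_ord_le κ)
  constructor
  · rintro ⟨h1, h2⟩
    refine ⟨le_trans h1 (Cardinal.mk_le_mk_of_subset Set.subset_union_left), ?_⟩
    intro U hU hFU
    obtain ⟨c, hc⟩ := exists_b_of_open hU hFU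
    obtain ⟨A, hAX, hAκ, hA⟩ := h2 c
    have hsub : (X ∪ FinS) \ U ⊆ A := by
      rintro x ⟨hxm, hxU⟩
      have hxX : x ∈ X := by
        rcases hxm with h | h
        · exact h
        · exact absurd (hFU h) hxU
      by_contra hxA
      have := hA x ⟨hxX, hxA⟩
      obtain ⟨n, hn⟩ := this.nonempty
      have := hc x (hX x hxX) hxU n
      exact absurd hn (by simp only [Set.mem_setOf_eq]; omega)
    exact lt_of_le_of_lt (Cardinal.mk_le_mk_of_subset hsub) hAκ
  · rintro ⟨h1, h2⟩
    have hκX : κ ≤ Cardinal.mk X := by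
      by_contra hlt
      push_neg at hlt
      have hFin : Cardinal.mk FinS ≤ Cardinal.aleph0 := by
        have := finS_countable.to_subtype
        exact Cardinal.mk_le_aleph0
      have : Cardinal.mk ↥(X ∪ FinS) < κ :=
        lt_of_le_of_lt (Cardinal.mk_union_le X FinS)
          (Cardinal.add_lt_of_lt haleph0_lt.le hlt (lt_of_le_of_lt hFin haleph0_lt))
      exact absurd h1 (not_le.2 this)
    refine ⟨hκX, ?_⟩
    intro b
    set V : ℕ → Set (ℕ → Bool) :=
      fun k => {y | ∃ n, k ≤ n ∧ Nat.count (fun i => y i = true) (b n + 1) ≤ n} with hV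
    have hVopen : ∀ k, IsOpen (V k) := by
      intro k
      have : V k = ⋃ n, ⋃ (_ : k ≤ n), {y | Nat.count (fun i => y i = true) (b n + 1) ≤ n} := by
        ext y; simp [hV]
      rw [this]
      refine isOpen_iUnion fun n => isOpen_iUnion fun _ => ?_
      rw [isOpen_pi_iff]
      intro f hf
      refine ⟨Finset.range (b n + 1), fun a => {f a}, fun a _ => ⟨isOpen_discrete _, rfl⟩, ?_⟩
      intro g hg
      have hcount : Nat.count (fun i => g i = true) (b n + 1) =
          Nat.count (fun i => f i = true) (b n + 1) := by
        rw [Nat.count_eq_card_filter_range, Nat.count_eq_card_filter_range]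
        congr 1
        apply Finset.filter_congr
        intro i hi
        rw [hg i hi]
      simpa [Set.mem_setOf_eq, hcount] using hf
    have hVFin : ∀ k, FinS ⊆ V k := by
      intro k x hx
      refine ⟨max k hx.toFinset.card, le_max_left _ _, ?_⟩
      have hsub : {i ∈ Finset.range (b (max k hx.toFinset.card) + 1) | x i = true} ⊆
          hx.toFinset := by
        intro i hi
        simp only [Finset.mem_filter] at hi
        exact hx.mem_toFinset.2 hi.2
      calc Nat.count (fun i => x i = true) (b (max k hx.toFinset.card) + 1)
          = _ := Nat.count_eq_card_filter_range _ _
        _ ≤ hx.toFinset.card := Finset.card_le_card hsub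
        _ ≤ max k hx.toFinset.card := le_max_right _ _
    refine ⟨X ∩ ⋃ k, ((X ∪ FinS) \ V k), Set.inter_subset_left, ?_, ?_⟩
    · have hle : Cardinal.mk ↥(⋃ k, ((X ∪ FinS) \ V k)) ≤
          Cardinal.aleph0 * ⨆ k, Cardinal.mk ↥((X ∪ FinS) \ V k) := by
        have := Cardinal.mk_iUnion_le (fun k => (X ∪ FinS) \ V k)
        rwa [Cardinal.mk_nat] at this
      have hsup : (⨆ k, Cardinal.mk ↥((X ∪ FinS) \ V k)) < κ := by
        apply Ordinal.iSup_lt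
        · rwa [Cardinal.mk_nat]
        · intro k; exact h2 (V k) (hVopen k) (hVFin k)
      calc Cardinal.mk ↥(X ∩ ⋃ k, ((X ∪ FinS) \ V k))
          ≤ Cardinal.mk ↥(⋃ k, ((X ∪ FinS) \ V k)) :=
            Cardinal.mk_le_mk_of_subset Set.inter_subset_right
        _ ≤ Cardinal.aleph0 * ⨆ k, Cardinal.mk ↥((X ∪ FinS) \ V k) := hle
        _ < κ := Cardinal.mul_lt_of_lt haleph0_lt.le haleph0_lt hsup
    · rintro x ⟨hxX, hxA⟩
      have hxV : ∀ k, x ∈ V k := by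
        intro k
        by_contra hxVk
        exact hxA ⟨hxX, Set.mem_iUnion.2 ⟨k, Or.inl hxX, hxVk⟩⟩
      have hinf : (setOf fun k => x k = true).Infinite := hX x hxX
      apply Set.infinite_of_forall_exists_gt
      intro a
      obtain ⟨n, hn, hcount⟩ := hxV (a + 1)
      refine ⟨n, ?_, by omega⟩
      simp only [Set.mem_setOf_eq]
      have := (Nat.count_le_iff_le_nth hinf (a := b n + 1) (b := n)).1 hcount
      omega
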